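/- Let G be a finite group of order n and M(G,2) = G × Z/2 the Chein double with multiplication (g,i)·(h,j) = ((g^{(−1)^j} h^{(−1)^{i+j}})^{(−1)^j}, i+j). Then M(G,2) is a Moufang loop, every element of the coset G × {1} has order 2, and M(G,2) is nonassociative if and only if G is nonabelian. -/
import Mathlib


/-- `g^{(-1)^j}` for `j : ZMod 2`. -/
def cexp {G : Type*} [Group G] (j : ZMod 2) (g : G) : G := if j = 0 then g else g⁻¹

/-- Multiplication of the Chein double `M(G,2)` on `G × ZMod 2`:
`(g,i)·(h,j) = ((g^{(−1)^j} h^{(−1)^{i+j}})^{(−1)^j}, i+j)`. -/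
def cheinMul {G : Type*} [Group G] (p q : G × ZMod 2) : G × ZMod 2 :=
  (cexp q.2 (cexp q.2 p.1 * cexp (p.2 + q.2) q.1), p.2 + q.2)

lemma zmod2_cases (j : ZMod 2) : j = 0 ∨ j = 1 := by revert j; decide

lemma cexp_zero {G : Type*} [Group G] (g : G) : cexp 0 g = g := rfl

lemma cexp_one {G : Type*} [Group G] (g : G) : cexp 1 g = g⁻¹ := by simp [cexp]

lemma z11 : (1 : ZMod 2) + 1 = 0 := by decide

lemma cexp_injective {G : Type*} [Group G] (j : ZMod 2) :
    Function.Injective (cexp j : G → G) := by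
  rcases zmod2_cases j with rfl | rfl
  · intro a b h; simpa [cexp_zero] using h
  · intro a b h; simp only [cexp_one] at h; exact inv_injective h

lemma cexp_one' {G : Type*} [Group G] (j : ZMod 2) : cexp j (1 : G) = 1 := by
  rcases zmod2_cases j with rfl | rfl <;> simp [cexp_zero, cexp_one]

lemma cexp_cexp {G : Type*} [Group G] (j : ZMod 2) (g : G) : cexp j (cexp j g) = g := by
  rcases zmod2_cases j with rfl | rfl <;> simp [cexp_zero, cexp_one]

lemma cheinMul_left_inj {G : Type*} [Group G] (a : G × ZMod 2) :
    Function.Injective (cheinMul a) := by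
  rintro ⟨z, k⟩ ⟨w, l⟩ h
  simp only [cheinMul, Prod.mk.injEq] at h
  obtain ⟨h1, h2⟩ := h
  have hk : k = l := by exact add_left_cancel h2
  subst hk
  have := cexp_injective k h1
  have := mul_left_cancel this
  have := cexp_injective (a.2 + k) this
  simp [this]

lemma cheinMul_right_inj {G : Type*} [Group G] (a : G × ZMod 2) :
    Function.Injective (fun z => cheinMul z a) := by
  rintro ⟨z, k⟩ ⟨w, l⟩ h
  simp only [cheinMul, Prod.mk.injEq] at h
  obtain ⟨h1, h2⟩ := h
  have hk : k = l := by exact add_right_cancel h2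
  subst hk
  have := cexp_injective a.2 h1
  have := mul_right_cancel this
  have := cexp_injective a.2 this
  simp [this]

theorem stmt17 {G : Type*} [Group G] [Finite G] :
    ((∀ a b : G × ZMod 2, ∃! z, cheinMul a z = b) ∧
      (∀ a b : G × ZMod 2, ∃! z, cheinMul z a = b) ∧
      (∀ p : G × ZMod 2, cheinMul (1, 0) p = p ∧ cheinMul p (1, 0) = p) ∧
      (∀ x y z : G × ZMod 2,
        cheinMul (cheinMul (cheinMul x y) x) z =
          cheinMul x (cheinMul y (cheinMul x z)))) ∧
    (∀ p : G × ZMod 2, p.2 = 1 → cheinMul p p = (1, 0) ∧ p ≠ (1, 0)) ∧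
    ((¬ ∀ x y z : G × ZMod 2,
        cheinMul (cheinMul x y) z = cheinMul x (cheinMul y z)) ↔
      ¬ ∀ g h : G, g * h = h * g) := by
  refine ⟨⟨?_, ?_, ?_, ?_⟩, ?_, ?_⟩
  · intro a b
    exact ((Finite.injective_iff_bijective.mp (cheinMul_left_inj a)).existsUnique b)
  · intro a b
    exact ((Finite.injective_iff_bijective.mp (cheinMul_right_inj a)).existsUnique b)
  · rintro ⟨p, i⟩
    constructor
    · simp [cheinMul, cexp_one', zero_add, cexp_cexp]
    · simp [cheinMul, cexp_one', add_zero, cexp_zero, cexp_cexp]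
  · rintro ⟨x, i⟩ ⟨y, j⟩ ⟨z, k⟩
    rcases zmod2_cases i with rfl | rfl <;> rcases zmod2_cases j with rfl | rfl <;>
      rcases zmod2_cases k with rfl | rfl <;>
      simp only [cheinMul, zero_add, add_zero, z11, cexp_zero, cexp_one, Prod.mk.injEq] <;>
      refine ⟨?_, trivial⟩ <;> group
  · rintro ⟨p, i⟩ hi
    simp only at hi
    subst hi
    constructor
    · simp [cheinMul, z11, cexp_zero, cexp_one]
    · intro h
      have : (1 : ZMod 2) = 0 := congrArg Prod.snd h
      exact one_ne_zero this
  · constructor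
    · intro hna
      intro hcomm
      apply hna
      letI : CommGroup G := { ‹Group G› with mul_comm := hcomm }
      rintro ⟨x, i⟩ ⟨y, j⟩ ⟨z, k⟩
      rcases zmod2_cases i with rfl | rfl <;> rcases zmod2_cases j with rfl | rfl <;>
        rcases zmod2_cases k with rfl | rfl <;>
        simp only [cheinMul, zero_add, add_zero, z11, cexp_zero, cexp_one, Prod.mk.injEq] <;>
        refine ⟨?_, trivial⟩ <;>
        simp [mul_inv_rev, mul_comm, mul_left_comm, mul_assoc]
    · intro hnc hass
      apply hnc
      intro g h
      have := hass (1, 1) (g⁻¹, 0) (h⁻¹, 0)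
      simp only [cheinMul, zero_add, add_zero, z11, cexp_zero, cexp_one, Prod.mk.injEq] at this
      obtain ⟨h1, -⟩ := this
      simpa [mul_inv_rev] using h1
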